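/- Let s₁, s₂ be real parameters and write z₁ = x₁ + iy₁, z₂ = x₂ + iy₂. At every point (z₁,z₂) of the open set where all five exponentials e^{2πi(s₂−1)−2πi(z₁+z₂)}, e^{2πi(s₂−1)−2πi z₂}, e^{2πi z₂}, e^{2πi(z₁+z₂)}, e^{2πi z₁} avoid the ray [1,∞), the real part of the potential function satisfies the differential equation Re Φ^{±(s₁,s₂)}(z₁,z₂) = (1/(2π))·V^{(s₁,s₂)}(z₁,z₂) + y₁·(∂/∂y₁)Re Φ^{±(s₁,s₂)}(z₁,z₂) + y₂·(∂/∂y₂)Re Φ^{±(s₁,s₂)}(z₁,z₂), where the partial derivatives are taken with respect to the imaginary parts y₁, y₂ holding x₁, x₂ fixed, and V^{(s₁,s₂)}(z₁,z₂) = D(e^{2πi(s₂−1)−2πi(z₁+z₂)}) − D(e^{2πi(s₂−1)−2πi z₂}) + D(e^{2πi z₂}) − D(e^{2πi(z₁+z₂)}) + D(e^{2πi z₁}). -/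

import Mathlib

open Real

/-- The dilogarithm `Li₂(z) = -∫₀¹ log(1 - t z)/t dt` (principal branch of `log`). -/
noncomputable def Li2 (z : ℂ) : ℂ :=
  -∫ t in (0:ℝ)..1, Complex.log (1 - (t:ℂ) * z) / (t:ℂ)

/-- `z` avoids the ray `[1,∞) ⊆ ℂ`. -/
def OffRay (z : ℂ) : Prop := ¬(z.im = 0 ∧ 1 ≤ z.re)

/-- The Bloch–Wigner function `D(z) = Im Li₂(z) + log|z|·arg(1-z)`. -/
noncomputable def BW (z : ℂ) : ℝ :=
  (Li2 z).im + Real.log ‖z‖ * (1 - z).arg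

/-- The potential function `Φ^{ε(s₁,s₂)}(z₁,z₂)` of the Whitehead link, where `ε = 1`
gives `Φ^{+(s₁,s₂)}` and `ε = -1` gives `Φ^{-(s₁,s₂)}`. -/
noncomputable def PhiS (ε s₁ s₂ z₁ z₂ : ℂ) : ℂ :=
  (1 / (2 * (π:ℂ) * Complex.I)) *
    (ε * (2*(π:ℂ)*Complex.I*(s₁ - 1)) * (2*(π:ℂ)*Complex.I*(z₁ - 1/2))
     - (2*(π:ℂ)*Complex.I*(s₂ - 1)) * (2*(π:ℂ)*Complex.I*z₁ + 2*(π:ℂ)*Complex.I*z₂)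
     + Li2 (Complex.exp (2*(π:ℂ)*Complex.I*(s₂ - 1) - 2*(π:ℂ)*Complex.I*z₁
            - 2*(π:ℂ)*Complex.I*z₂))
     - Li2 (Complex.exp (2*(π:ℂ)*Complex.I*(s₂ - 1) - 2*(π:ℂ)*Complex.I*z₂))
     + Li2 (Complex.exp (2*(π:ℂ)*Complex.I*z₂))
     - Li2 (Complex.exp (2*(π:ℂ)*Complex.I*(z₁ + z₂)))
     + Li2 (Complex.exp (2*(π:ℂ)*Complex.I*z₁)))

lemma offRay_slit {z : ℂ} (h : OffRay z) {t : ℝ} (ht : t ∈ Set.Icc (0:ℝ) 1) :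
    (1 : ℂ) - (t:ℂ) * z ∈ Complex.slitPlane := by
  rw [Complex.mem_slitPlane_iff]
  simp only [Complex.sub_re, Complex.sub_im, Complex.one_re, Complex.one_im,
    Complex.mul_re, Complex.mul_im, Complex.ofReal_re, Complex.ofReal_im]
  by_cases him : z.im = 0
  · left
    have hre : z.re < 1 := by
      by_contra hre
      exact h ⟨him, le_of_not_gt hre⟩
    have hlt : t * z.re < 1 := by
      rcases le_or_gt z.re 0 with h' | h'
      · nlinarith [mul_nonneg ht.1 (neg_nonneg.2 h')]
      · nlinarith [mul_le_of_le_one_left h'.le ht.2]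
    simp only [him, mul_zero, sub_zero]
    linarith
  · rcases eq_or_ne t 0 with h0 | h0
    · left; simp [h0]
    · right
      simp only [zero_mul, sub_zero]
      intro hc
      rcases mul_eq_zero.1 (by linarith [hc] : t * z.im = 0) with h' | h'
      · exact h0 h'
      · exact him h'

lemma offRay_ne {z : ℂ} (h : OffRay z) {t : ℝ} (ht : t ∈ Set.Icc (0:ℝ) 1) :
    (1 : ℂ) - (t:ℂ) * z ≠ 0 :=
  Complex.slitPlane_ne_zero (offRay_slit h ht)

lemma isOpen_offRay : IsOpen {z : ℂ | OffRay z} := by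
  have : {z : ℂ | OffRay z} = (Complex.im ⁻¹' {0} ∩ Complex.re ⁻¹' Set.Ici 1)ᶜ := by
    ext z; simp only [OffRay, Set.mem_setOf_eq, Set.mem_compl_iff, Set.mem_inter_iff,
      Set.mem_preimage, Set.mem_singleton_iff, Set.mem_Ici]
  rw [this]
  exact ((isClosed_singleton.preimage Complex.continuous_im).inter
    (isClosed_Ici.preimage Complex.continuous_re)).isOpen_compl


open Metric in
lemma exists_ball_bound {z₀ : ℂ} (h : OffRay z₀) :
    ∃ r > 0, ∃ C : ℝ, (∀ x ∈ closedBall z₀ r, OffRay x) ∧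
      ∀ x ∈ closedBall z₀ r, ∀ t ∈ Set.Icc (0:ℝ) 1, ‖((1:ℂ) - (t:ℂ) * x)⁻¹‖ ≤ C := by
  obtain ⟨r', hr', hsub⟩ := Metric.isOpen_iff.1 isOpen_offRay z₀ h
  set r := r' / 2 with hrdef
  have hrpos : 0 < r := by positivity
  have hball : closedBall z₀ r ⊆ {z : ℂ | OffRay z} :=
    (closedBall_subset_ball (by linarith)).trans hsub
  have hK : IsCompact (Set.Icc (0:ℝ) 1 ×ˢ closedBall z₀ r) :=
    isCompact_Icc.prod (isCompact_closedBall _ _)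
  have hcont : ContinuousOn (fun p : ℝ × ℂ => ((1:ℂ) - (p.1:ℂ) * p.2)⁻¹)
      (Set.Icc (0:ℝ) 1 ×ˢ closedBall z₀ r) := by
    apply ContinuousOn.inv₀
    · fun_prop
    · rintro ⟨t, x⟩ ⟨ht, hx⟩
      exact offRay_ne (hball hx) ht
  obtain ⟨C, hC⟩ := hK.exists_bound_of_continuousOn hcont
  exact ⟨r, hrpos, C, fun x hx => hball hx, fun x hx t ht => hC ⟨t, x⟩ ⟨ht, hx⟩⟩

lemma integral_inv_one_sub {z₀ : ℂ} (h : OffRay z₀) (hz : z₀ ≠ 0) :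
    ∫ t in (0:ℝ)..1, ((1:ℂ) - (t:ℂ) * z₀)⁻¹ = -Complex.log (1 - z₀) / z₀ := by
  have hderiv : ∀ t ∈ Set.uIcc (0:ℝ) 1,
      HasDerivAt (fun s : ℝ => -Complex.log (1 - (s:ℂ) * z₀) / z₀)
        (((1:ℂ) - (t:ℂ) * z₀)⁻¹) t := by
    intro t ht
    rw [Set.uIcc_of_le zero_le_one] at ht
    have h1 : HasDerivAt (fun s : ℝ => (1:ℂ) - (s:ℂ) * z₀) (-z₀) t := by
      simpa using ((Complex.ofRealCLM.hasDerivAt (x := t)).mul_const z₀).const_sub 1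
    have h2 := (h1.clog_real (offRay_slit h ht)).neg.div_const z₀
    refine h2.congr_deriv ?_
    field_simp [offRay_ne h ht]
  have hcont : ContinuousOn (fun t : ℝ => ((1:ℂ) - (t:ℂ) * z₀)⁻¹) (Set.Icc (0:ℝ) 1) := by
    apply ContinuousOn.inv₀
    · fun_prop
    · exact fun t ht => offRay_ne h ht
  have := intervalIntegral.integral_eq_sub_of_hasDerivAt hderiv
    (hcont.intervalIntegrable_of_Icc zero_le_one)
  rw [this]
  simp [Complex.log_one]


open MeasureTheory Metric in
/-- The integrand of `Li2 x` is interval integrable on `[0,1]`. -/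
lemma Li2_integrand_integrable {x : ℂ} (h : OffRay x) :
    IntervalIntegrable (fun t : ℝ => Complex.log (1 - (t:ℂ) * x) / (t:ℂ)) volume 0 1 := by
  set G : ℝ → ℂ := fun t => if t = 0 then -x else Complex.log (1 - (t:ℂ) * x) / (t:ℂ) with hG
  have hGcont : ContinuousOn G (Set.Icc (0:ℝ) 1) := by
    intro t ht
    rcases eq_or_ne t 0 with rfl | ht0
    · -- continuity at 0 via the derivative of s ↦ log (1 - s x) at 0
      have hd : HasDerivAt (fun s : ℝ => Complex.log (1 - (s:ℂ) * x)) (-x) 0 := by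
        have h1 : HasDerivAt (fun s : ℝ => (1:ℂ) - (s:ℂ) * x) (-x) 0 := by
          simpa using ((Complex.ofRealCLM.hasDerivAt (x := (0:ℝ))).mul_const x).const_sub 1
        have := h1.clog_real (by simpa using offRay_slit h (Set.left_mem_Icc.2 zero_le_one))
        simpa using this
      have hslope := hasDerivAt_iff_tendsto_slope.1 hd
      have heq : ∀ s : ℝ, s ≠ 0 → slope (fun s : ℝ => Complex.log (1 - (s:ℂ) * x)) 0 s = G s := by
        intro s hs
        simp only [slope, hG, hs, if_neg hs, vsub_eq_sub, sub_zero]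
        rw [Complex.real_smul]
        push_cast
        rw [show Complex.log (1 - (s:ℂ) * x) - Complex.log (1 - 0 * x) = Complex.log (1 - (s:ℂ)*x) by simp]
        field_simp
      have : Filter.Tendsto G (nhdsWithin 0 {(0:ℝ)}ᶜ) (nhds (-x)) := by
        apply hslope.congr'
        filter_upwards [self_mem_nhdsWithin] with s hs using (heq s hs)
      have hcw : ContinuousWithinAt G {(0:ℝ)}ᶜ 0 := by
        rw [ContinuousWithinAt, hG]
        simpa using this
      have : ContinuousWithinAt G (Set.Icc (0:ℝ) 1) 0 := by
        rw [← continuousWithinAt_diff_self]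
        exact hcw.mono (fun s hs => hs.2)
      exact this
    · -- continuity at t ≠ 0
      apply ContinuousAt.continuousWithinAt
      have hne : ContinuousAt (fun t : ℝ => Complex.log (1 - (t:ℂ) * x) / (t:ℂ)) t := by
        apply ContinuousAt.div
        · have hin : ContinuousAt (fun s : ℝ => (1:ℂ) - (s:ℂ) * x) t := by fun_prop
          exact hin.clog (offRay_slit h ht)
        · fun_prop
        · exact_mod_cast Complex.ofReal_ne_zero.2 ht0
      apply hne.congr
      filter_upwards [isOpen_compl_singleton.mem_nhds ht0] with s hs
      exact (if_neg hs).symm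
  have hGint : IntervalIntegrable G volume 0 1 := hGcont.intervalIntegrable_of_Icc zero_le_one
  rw [intervalIntegrable_iff] at hGint ⊢
  apply hGint.congr_fun _ measurableSet_uIoc
  intro t ht
  rw [Set.uIoc_of_le zero_le_one] at ht
  simp [hG, if_neg (ne_of_gt ht.1)]

open MeasureTheory Metric intervalIntegral in
lemma hasDerivAt_Li2 {z₀ : ℂ} (h : OffRay z₀) (hz : z₀ ≠ 0) :
    HasDerivAt Li2 (-Complex.log (1 - z₀) / z₀) z₀ := by
  obtain ⟨r, hr, C, hball, hC⟩ := exists_ball_bound h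
  have key := intervalIntegral.hasDerivAt_integral_of_dominated_loc_of_deriv_le
    (F := fun (x : ℂ) (t : ℝ) => Complex.log (1 - (t:ℂ) * x) / (t:ℂ))
    (F' := fun (x : ℂ) (t : ℝ) => -((1:ℂ) - (t:ℂ) * x)⁻¹)
    (bound := fun _ => C) (a := 0) (b := 1) (μ := volume) (x₀ := z₀) (Metric.ball_mem_nhds z₀ hr)
    ?_ ?_ ?_ ?_ ?_ ?_
  · have hL : HasDerivAt Li2 (-∫ t in (0:ℝ)..1, -((1:ℂ) - (t:ℂ) * z₀)⁻¹) z₀ := key.2.neg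
    rw [intervalIntegral.integral_neg, neg_neg, integral_inv_one_sub h hz] at hL
    exact hL
  · -- measurability of F x for x near z₀
    filter_upwards [Metric.closedBall_mem_nhds z₀ hr] with x hx
    have : ContinuousOn (fun t : ℝ => Complex.log (1 - (t:ℂ) * x) / (t:ℂ)) (Set.uIoc (0:ℝ) 1) := by
      rw [Set.uIoc_of_le zero_le_one]
      intro t ht
      apply ContinuousAt.continuousWithinAt
      apply ContinuousAt.div
      · have hin : ContinuousAt (fun s : ℝ => (1:ℂ) - (s:ℂ) * x) t := by fun_prop
        exact hin.clog (offRay_slit (hball x hx) ⟨ht.1.le, ht.2⟩)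
      · fun_prop
      · exact_mod_cast Complex.ofReal_ne_zero.2 (ne_of_gt ht.1)
    exact this.aestronglyMeasurable measurableSet_uIoc
  · exact Li2_integrand_integrable h
  · -- measurability of F' z₀
    have : ContinuousOn (fun t : ℝ => -((1:ℂ) - (t:ℂ) * z₀)⁻¹) (Set.uIoc (0:ℝ) 1) := by
      rw [Set.uIoc_of_le zero_le_one]
      apply ContinuousOn.neg
      apply ContinuousOn.inv₀
      · fun_prop
      · exact fun t ht => offRay_ne h ⟨ht.1.le, ht.2⟩
    exact this.aestronglyMeasurable measurableSet_uIoc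
  · -- bound
    apply Filter.Eventually.of_forall
    intro t ht x hx
    rw [Set.uIoc_of_le zero_le_one] at ht
    rw [norm_neg]
    exact hC x (ball_subset_closedBall hx) t ⟨ht.1.le, ht.2⟩
  · exact intervalIntegrable_const
  · -- differentiability in x
    apply Filter.Eventually.of_forall
    intro t ht x hx
    rw [Set.uIoc_of_le zero_le_one] at ht
    have ht0 : (t:ℂ) ≠ 0 := by exact_mod_cast ne_of_gt ht.1
    have h1 : HasDerivAt (fun x : ℂ => (1:ℂ) - (t:ℂ) * x) (-(t:ℂ)) x := by
      simpa using ((hasDerivAt_id x).const_mul (t:ℂ)).const_sub 1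
    have h2 := (h1.clog (offRay_slit (hball x (ball_subset_closedBall hx)) ⟨ht.1.le, ht.2⟩)).div_const (t:ℂ)
    refine h2.congr_deriv ?_
    field_simp [offRay_ne (hball x (ball_subset_closedBall hx)) (⟨ht.1.le, ht.2⟩ : t ∈ Set.Icc (0:ℝ) 1)]


lemma hasDerivAt_Li2_exp {f : ℂ → ℂ} {f' x : ℂ} (hf : HasDerivAt f f' x)
    (h : OffRay (Complex.exp (f x))) :
    HasDerivAt (fun z => Li2 (Complex.exp (f z)))
      (-Complex.log (1 - Complex.exp (f x)) * f') x := by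
  have h3 := (hasDerivAt_Li2 h (Complex.exp_ne_zero (f x))).comp x hf.cexp
  refine h3.congr_deriv ?_
  field_simp [Complex.exp_ne_zero]

lemma hasDerivAt_PhiS_fst (ε s₁ s₂ z₂ z₁ : ℂ)
    (h1 : OffRay (Complex.exp (2*(π:ℂ)*Complex.I*(s₂ - 1) - 2*(π:ℂ)*Complex.I*z₁
            - 2*(π:ℂ)*Complex.I*z₂)))
    (h4 : OffRay (Complex.exp (2*(π:ℂ)*Complex.I*(z₁ + z₂))))
    (h5 : OffRay (Complex.exp (2*(π:ℂ)*Complex.I*z₁))) :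
    HasDerivAt (fun z => PhiS ε s₁ s₂ z z₂)
      (ε * (2*(π:ℂ)*Complex.I*(s₁ - 1)) - (2*(π:ℂ)*Complex.I*(s₂ - 1))
        + Complex.log (1 - Complex.exp (2*(π:ℂ)*Complex.I*(s₂ - 1) - 2*(π:ℂ)*Complex.I*z₁
            - 2*(π:ℂ)*Complex.I*z₂))
        + Complex.log (1 - Complex.exp (2*(π:ℂ)*Complex.I*(z₁ + z₂)))
        - Complex.log (1 - Complex.exp (2*(π:ℂ)*Complex.I*z₁))) z₁ := by
  set A := 2*(π:ℂ)*Complex.I with hA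
  have hAne : A ≠ 0 := by
    simp [hA, Complex.I_ne_zero, Real.pi_ne_zero, Complex.ofReal_ne_zero]
  have t1 : HasDerivAt (fun z : ℂ => ε * (A*(s₁ - 1)) * (A*(z - 1/2)))
      (ε * (A*(s₁ - 1)) * (A*1)) z₁ :=
    (((hasDerivAt_id z₁).sub_const (1/2)).const_mul A).const_mul (ε * (A*(s₁-1)))
  have t2 : HasDerivAt (fun z : ℂ => (A*(s₂ - 1)) * (A*z + A*z₂))
      ((A*(s₂ - 1)) * (A*1)) z₁ :=
    (((hasDerivAt_id z₁).const_mul A).add_const (A*z₂)).const_mul (A*(s₂-1))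
  have u1 : HasDerivAt (fun z : ℂ => A*(s₂ - 1) - A*z - A*z₂) (-(A*1)) z₁ := by
    exact (((hasDerivAt_id z₁).const_mul A).const_sub (A*(s₂-1))).sub_const (A*z₂)
  have u4 : HasDerivAt (fun z : ℂ => A*(z + z₂)) (A*1) z₁ :=
    ((hasDerivAt_id z₁).add_const z₂).const_mul A
  have u5 : HasDerivAt (fun z : ℂ => A*z) (A*1) z₁ := (hasDerivAt_id z₁).const_mul A
  have l1 := hasDerivAt_Li2_exp u1 h1
  have l4 := hasDerivAt_Li2_exp u4 h4
  have l5 := hasDerivAt_Li2_exp u5 h5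
  have H := (((((((t1.sub t2).add l1).sub (hasDerivAt_const z₁
      (Li2 (Complex.exp (A*(s₂ - 1) - A*z₂))))).add (hasDerivAt_const z₁
      (Li2 (Complex.exp (A*z₂))))).sub l4).add l5).const_mul (1/A))
  simp only [PhiS, ← hA]
  refine H.congr_deriv ?_
  field_simp
  ring

lemma hasDerivAt_PhiS_snd (ε s₁ s₂ z₁ z₂ : ℂ)
    (h1 : OffRay (Complex.exp (2*(π:ℂ)*Complex.I*(s₂ - 1) - 2*(π:ℂ)*Complex.I*z₁
            - 2*(π:ℂ)*Complex.I*z₂)))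
    (h2 : OffRay (Complex.exp (2*(π:ℂ)*Complex.I*(s₂ - 1) - 2*(π:ℂ)*Complex.I*z₂)))
    (h3 : OffRay (Complex.exp (2*(π:ℂ)*Complex.I*z₂)))
    (h4 : OffRay (Complex.exp (2*(π:ℂ)*Complex.I*(z₁ + z₂)))) :
    HasDerivAt (fun z => PhiS ε s₁ s₂ z₁ z)
      (-(2*(π:ℂ)*Complex.I*(s₂ - 1))
        + Complex.log (1 - Complex.exp (2*(π:ℂ)*Complex.I*(s₂ - 1) - 2*(π:ℂ)*Complex.I*z₁
            - 2*(π:ℂ)*Complex.I*z₂))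
        - Complex.log (1 - Complex.exp (2*(π:ℂ)*Complex.I*(s₂ - 1) - 2*(π:ℂ)*Complex.I*z₂))
        - Complex.log (1 - Complex.exp (2*(π:ℂ)*Complex.I*z₂))
        + Complex.log (1 - Complex.exp (2*(π:ℂ)*Complex.I*(z₁ + z₂)))) z₂ := by
  set A := 2*(π:ℂ)*Complex.I with hA
  have hAne : A ≠ 0 := by
    simp [hA, Complex.I_ne_zero, Real.pi_ne_zero, Complex.ofReal_ne_zero]
  have t2 : HasDerivAt (fun z : ℂ => (A*(s₂ - 1)) * (A*z₁ + A*z))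
      ((A*(s₂ - 1)) * (A*1)) z₂ :=
    (((hasDerivAt_id z₂).const_mul A).const_add (A*z₁)).const_mul (A*(s₂-1))
  have u1 : HasDerivAt (fun z : ℂ => A*(s₂ - 1) - A*z₁ - A*z) (-(A*1)) z₂ := by
    exact ((hasDerivAt_id z₂).const_mul A).const_sub (A*(s₂-1) - A*z₁)
  have u2 : HasDerivAt (fun z : ℂ => A*(s₂ - 1) - A*z) (-(A*1)) z₂ :=
    ((hasDerivAt_id z₂).const_mul A).const_sub (A*(s₂-1))
  have u3 : HasDerivAt (fun z : ℂ => A*z) (A*1) z₂ := (hasDerivAt_id z₂).const_mul A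
  have u4 : HasDerivAt (fun z : ℂ => A*(z₁ + z)) (A*1) z₂ :=
    ((hasDerivAt_id z₂).const_add z₁).const_mul A
  have l1 := hasDerivAt_Li2_exp u1 h1
  have l2 := hasDerivAt_Li2_exp u2 h2
  have l3 := hasDerivAt_Li2_exp u3 h3
  have l4 := hasDerivAt_Li2_exp u4 h4
  have H := ((((((hasDerivAt_const z₂ (ε * (A*(s₁ - 1)) * (A*(z₁ - 1/2)))).sub t2).add
      l1).sub l2).add l3).sub l4).add (hasDerivAt_const z₂ (Li2 (Complex.exp (A*z₁))))
  have H' := H.const_mul (1/A)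
  simp only [PhiS, ← hA]
  refine H'.congr_deriv ?_
  field_simp
  ring


lemma re_inv2piI (X : ℂ) : (1 / (2 * (π:ℂ) * Complex.I) * X).re = X.im / (2*π) := by
  have h : 1 / (2 * (π:ℂ) * Complex.I) * X = -Complex.I * X / (2*(π:ℂ)) := by
    have hpi : (π:ℂ) ≠ 0 := Complex.ofReal_ne_zero.2 Real.pi_ne_zero
    field_simp [Complex.I_ne_zero]
    linear_combination X * Complex.I_mul_I
  rw [h, show (2*(π:ℂ)) = ((2*π:ℝ):ℂ) by push_cast; ring, Complex.div_ofReal_re]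
  simp


theorem stmt_9 (ε : ℂ) (hε : ε = 1 ∨ ε = -1) (s₁ s₂ x₁ y₁ x₂ y₂ : ℝ)
    (z₁ z₂ : ℂ) (hz₁ : z₁ = (x₁:ℂ) + (y₁:ℝ)*Complex.I) (hz₂ : z₂ = (x₂:ℂ) + (y₂:ℝ)*Complex.I)
    (h1 : OffRay (Complex.exp (2*(π:ℂ)*Complex.I*((s₂:ℂ) - 1) - 2*(π:ℂ)*Complex.I*(z₁ + z₂))))
    (h2 : OffRay (Complex.exp (2*(π:ℂ)*Complex.I*((s₂:ℂ) - 1) - 2*(π:ℂ)*Complex.I*z₂)))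
    (h3 : OffRay (Complex.exp (2*(π:ℂ)*Complex.I*z₂)))
    (h4 : OffRay (Complex.exp (2*(π:ℂ)*Complex.I*(z₁ + z₂))))
    (h5 : OffRay (Complex.exp (2*(π:ℂ)*Complex.I*z₁))) :
    (PhiS ε s₁ s₂ z₁ z₂).re =
      (1/(2*π)) *
        (BW (Complex.exp (2*(π:ℂ)*Complex.I*((s₂:ℂ) - 1) - 2*(π:ℂ)*Complex.I*(z₁ + z₂)))
         - BW (Complex.exp (2*(π:ℂ)*Complex.I*((s₂:ℂ) - 1) - 2*(π:ℂ)*Complex.I*z₂))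
         + BW (Complex.exp (2*(π:ℂ)*Complex.I*z₂))
         - BW (Complex.exp (2*(π:ℂ)*Complex.I*(z₁ + z₂)))
         + BW (Complex.exp (2*(π:ℂ)*Complex.I*z₁)))
      + y₁ * deriv (fun t : ℝ => (PhiS ε s₁ s₂ ((x₁:ℂ) + (t:ℝ)*Complex.I) z₂).re) y₁
      + y₂ * deriv (fun t : ℝ => (PhiS ε s₁ s₂ z₁ ((x₂:ℂ) + (t:ℝ)*Complex.I)).re) y₂ := by
  obtain ⟨e, rfl⟩ : ∃ e : ℝ, ε = (e:ℂ) := by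
    rcases hε with rfl | rfl
    exacts [⟨1, by norm_num⟩, ⟨-1, by norm_num⟩]
  have hE1eq : 2*(π:ℂ)*Complex.I*((s₂:ℂ) - 1) - 2*(π:ℂ)*Complex.I*(z₁ + z₂)
      = 2*(π:ℂ)*Complex.I*((s₂:ℂ) - 1) - 2*(π:ℂ)*Complex.I*z₁ - 2*(π:ℂ)*Complex.I*z₂ := by
    ring
  rw [hE1eq] at h1 ⊢
  subst hz₁; subst hz₂
  set w₁ : ℂ := (x₁:ℂ) + (y₁:ℝ)*Complex.I with hw₁
  set w₂ : ℂ := (x₂:ℂ) + (y₂:ℝ)*Complex.I with hw₂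
  have hw₁re : w₁.re = x₁ := by simp [hw₁]
  have hw₁im : w₁.im = y₁ := by simp [hw₁]
  have hw₂re : w₂.re = x₂ := by simp [hw₂]
  have hw₂im : w₂.im = y₂ := by simp [hw₂]
  have D1 : deriv (fun t : ℝ => (PhiS (e:ℂ) (s₁:ℂ) (s₂:ℂ) ((x₁:ℂ) + (t:ℝ)*Complex.I) w₂).re) y₁
      = (((e:ℂ) * (2*(π:ℂ)*Complex.I*((s₁:ℂ) - 1)) - (2*(π:ℂ)*Complex.I*((s₂:ℂ) - 1))
        + Complex.log (1 - Complex.exp (2*(π:ℂ)*Complex.I*((s₂:ℂ) - 1) - 2*(π:ℂ)*Complex.I*w₁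
            - 2*(π:ℂ)*Complex.I*w₂))
        + Complex.log (1 - Complex.exp (2*(π:ℂ)*Complex.I*(w₁ + w₂)))
        - Complex.log (1 - Complex.exp (2*(π:ℂ)*Complex.I*w₁))) * Complex.I).re := by
    have Hz1 : HasDerivAt (fun w : ℂ => (x₁:ℂ) + w*Complex.I) Complex.I ((y₁:ℂ)) := by
      simpa using ((hasDerivAt_id ((y₁:ℂ))).mul_const Complex.I).const_add (x₁:ℂ)
    have H1 := (hasDerivAt_PhiS_fst (e:ℂ) (s₁:ℂ) (s₂:ℂ) w₂ w₁ h1 h4 h5).comp ((y₁:ℂ)) Hz1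
    exact H1.real_of_complex.deriv
  have D2 : deriv (fun t : ℝ => (PhiS (e:ℂ) (s₁:ℂ) (s₂:ℂ) w₁ ((x₂:ℂ) + (t:ℝ)*Complex.I)).re) y₂
      = ((-(2*(π:ℂ)*Complex.I*((s₂:ℂ) - 1))
        + Complex.log (1 - Complex.exp (2*(π:ℂ)*Complex.I*((s₂:ℂ) - 1) - 2*(π:ℂ)*Complex.I*w₁
            - 2*(π:ℂ)*Complex.I*w₂))
        - Complex.log (1 - Complex.exp (2*(π:ℂ)*Complex.I*((s₂:ℂ) - 1) - 2*(π:ℂ)*Complex.I*w₂))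
        - Complex.log (1 - Complex.exp (2*(π:ℂ)*Complex.I*w₂))
        + Complex.log (1 - Complex.exp (2*(π:ℂ)*Complex.I*(w₁ + w₂)))) * Complex.I).re := by
    have Hz2 : HasDerivAt (fun w : ℂ => (x₂:ℂ) + w*Complex.I) Complex.I ((y₂:ℂ)) := by
      simpa using ((hasDerivAt_id ((y₂:ℂ))).mul_const Complex.I).const_add (x₂:ℂ)
    have H2 := (hasDerivAt_PhiS_snd (e:ℂ) (s₁:ℂ) (s₂:ℂ) w₁ w₂ h1 h2 h3 h4).comp ((y₂:ℂ)) Hz2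
    exact H2.real_of_complex.deriv
  rw [D1, D2]
  simp only [BW, PhiS]
  rw [re_inv2piI]
  simp only [Complex.norm_exp, Real.log_exp, ← Complex.log_im]
  rw [show (1/2 : ℂ) = ((1/2:ℝ):ℂ) from by norm_num]
  simp only [Complex.add_re, Complex.add_im, Complex.sub_re, Complex.sub_im, Complex.mul_re,
    Complex.mul_im, Complex.I_re, Complex.I_im, Complex.ofReal_re, Complex.ofReal_im,
    Complex.one_re, Complex.one_im, Complex.re_ofNat, Complex.im_ofNat, Complex.neg_re,
    Complex.neg_im, hw₁re, hw₁im, hw₂re, hw₂im]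
  field_simp
  ring
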